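/- Let P be the Markov kernel on (S, 𝓕) given by P(s, F) = ∫_F p(s,t) λ(dt) with p(s,t) = ∫_A m(s,t,a) τ(da), let Pⁿ denote its n-fold iterate, and for x ∈ K let xPⁿ(F) = ∫_S Pⁿ(s, F) x(ds). Suppose 𝐏 is a Markov kernel on the space of measures on (S, 𝓕) (with the evaluation σ-algebra) such that for every x ∈ K and every measurable set E of measures, 𝐏(x, E) = ∫_A 1_E(h(x,a)) ‖xM_a‖ τ(da). Then for every integer n ≥ 1, every x ∈ K and every F ∈ 𝓕, the barycenter of 𝐏ⁿ(x, ·) at F equals (xPⁿ)(F), i.e. ∫ z(F) 𝐏ⁿ(x, dz) = (xPⁿ)(F). -/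

import Mathlib

open MeasureTheory ProbabilityTheory
open scoped NNReal ENNReal Classical

/-- The measure `xM_a`, `xM_a(F) = ∫_S ∫_F m(s,t,a) λ(dt) x(ds)`. -/
noncomputable def xMa {S A : Type*} [MeasurableSpace S] [MeasurableSpace A]
    (lam : Measure S) (m : S → S → A → ℝ≥0) (x : Measure S) (a : A) : Measure S :=
  x.bind fun s => lam.withDensity fun t => (m s t a : ℝ≥0∞)

/-- The map `h(x,a) = xM_a/‖xM_a‖` if `‖xM_a‖ > 0`, and `h(x,a) = x` otherwise. -/
noncomputable def hmap {S A : Type*} [MeasurableSpace S] [MeasurableSpace A]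
    (lam : Measure S) (m : S → S → A → ℝ≥0) (x : Measure S) (a : A) : Measure S :=
  if 0 < xMa lam m x a Set.univ then (xMa lam m x a Set.univ)⁻¹ • xMa lam m x a else x

/-- The Markov kernel `P(s,F) = ∫_F p(s,t) λ(dt)` with `p(s,t) = ∫_A m(s,t,a) τ(da)`. -/
noncomputable def Pone {S A : Type*} [MeasurableSpace S] [MeasurableSpace A]
    (lam : Measure S) (τ : Measure A) (m : S → S → A → ℝ≥0) (s : S) : Measure S :=
  lam.withDensity fun t => ∫⁻ a, (m s t a : ℝ≥0∞) ∂τ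

/-- Iterates of `P`: `Piter n s = P^{n+1}(s, ·)`. -/
noncomputable def Piter {S A : Type*} [MeasurableSpace S] [MeasurableSpace A]
    (lam : Measure S) (τ : Measure A) (m : S → S → A → ℝ≥0) : ℕ → S → Measure S
  | 0 => Pone lam τ m
  | n + 1 => fun s => (Piter lam τ m n s).bind (Pone lam τ m)

/-- Iterates of the filter kernel `𝐏`: `BPiter BP n x = 𝐏^{n+1}(x, ·)`. -/
noncomputable def BPiter {S : Type*} [MeasurableSpace S]
    (BP : Kernel (Measure S) (Measure S)) : ℕ → Measure S → Measure (Measure S)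
  | 0 => fun x => BP x
  | n + 1 => fun x => (BPiter BP n x).bind fun z => BP z

section Aux

variable {S A : Type*} [MeasurableSpace S] [MeasurableSpace A]
  {lam : Measure S} [SigmaFinite lam] {τ : Measure A} [SigmaFinite τ]
  {m : S → S → A → ℝ≥0}

set_option linter.unusedSectionVars false

/-- equality of ENNReal-valued measurable functions is a measurable set -/
lemma aux_measurableSet_eq {α : Type*} [MeasurableSpace α] {f g : α → ℝ≥0∞}
    (hf : Measurable f) (hg : Measurable g) : MeasurableSet {x | f x = g x} := by
  have : {x | f x = g x} = {x | f x ≤ g x} ∩ {x | g x ≤ f x} := by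
    ext; simp [le_antisymm_iff, Set.mem_setOf_eq]
  rw [this]; exact (measurableSet_le hf hg).inter (measurableSet_le hg hf)

lemma hm' (hm : Measurable fun p : S × S × A => m p.1 p.2.1 p.2.2) :
    Measurable fun p : S × S × A => (m p.1 p.2.1 p.2.2 : ℝ≥0∞) :=
  measurable_coe_nnreal_ennreal.comp hm

lemma m_meas_st (hm : Measurable fun p : S × S × A => m p.1 p.2.1 p.2.2)
    (s : S) (a : A) : Measurable fun t : S => (m s t a : ℝ≥0∞) :=
  (hm' hm).comp (measurable_const.prodMk (measurable_id.prodMk measurable_const))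

lemma m_meas_a (hm : Measurable fun p : S × S × A => m p.1 p.2.1 p.2.2)
    (s t : S) : Measurable fun a : A => (m s t a : ℝ≥0∞) :=
  (hm' hm).comp (measurable_const.prodMk (measurable_const.prodMk measurable_id))

lemma m_meas_sa (hm : Measurable fun p : S × S × A => m p.1 p.2.1 p.2.2) :
    Measurable fun q : (S × A) × S => (m q.1.1 q.2 q.1.2 : ℝ≥0∞) :=
  (hm' hm).comp ((measurable_fst.comp measurable_fst).prodMk
    (measurable_snd.prodMk (measurable_snd.comp measurable_fst)))

lemma m_meas_as (hm : Measurable fun p : S × S × A => m p.1 p.2.1 p.2.2) :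
    Measurable fun q : (A × S) × S => (m q.1.2 q.2 q.1.1 : ℝ≥0∞) :=
  (hm' hm).comp ((measurable_snd.comp measurable_fst).prodMk
    (measurable_snd.prodMk (measurable_fst.comp measurable_fst)))

lemma m_meas_at (hm : Measurable fun p : S × S × A => m p.1 p.2.1 p.2.2) (s : S) :
    Measurable fun q : A × S => (m s q.2 q.1 : ℝ≥0∞) :=
  (hm' hm).comp (measurable_const.prodMk (measurable_snd.prodMk measurable_fst))

lemma meas_withDensity_fixed (hm : Measurable fun p : S × S × A => m p.1 p.2.1 p.2.2) (a : A) :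
    Measurable fun s : S => lam.withDensity fun t => (m s t a : ℝ≥0∞) := by
  apply Measure.measurable_of_measurable_coe
  intro G hG
  have h1 : ∀ s : S, (lam.withDensity fun t => (m s t a : ℝ≥0∞)) G
      = ∫⁻ t in G, (m s t a : ℝ≥0∞) ∂lam := fun s => withDensity_apply _ hG
  simp only [h1]
  have h2 : Measurable fun q : S × S => (m q.1 q.2 a : ℝ≥0∞) :=
    (hm' hm).comp (measurable_fst.prodMk (measurable_snd.prodMk measurable_const))
  exact Measurable.lintegral_prod_right' (ν := lam.restrict G)
    (f := fun q : S × S => (m q.1 q.2 a : ℝ≥0∞)) h2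

lemma xMa_apply (hm : Measurable fun p : S × S × A => m p.1 p.2.1 p.2.2)
    (x : Measure S) (a : A) {G : Set S} (hG : MeasurableSet G) :
    xMa lam m x a G = ∫⁻ s, ∫⁻ t in G, (m s t a : ℝ≥0∞) ∂lam ∂x := by
  rw [xMa, Measure.bind_apply hG (meas_withDensity_fixed hm a).aemeasurable]
  exact lintegral_congr fun s => withDensity_apply _ hG

lemma xMa_lintegral (hm : Measurable fun p : S × S × A => m p.1 p.2.1 p.2.2)
    (x : Measure S) (a : A) {f : S → ℝ≥0∞} (hf : Measurable f) :
    ∫⁻ t, f t ∂(xMa lam m x a) = ∫⁻ s, ∫⁻ t, (m s t a : ℝ≥0∞) * f t ∂lam ∂x := by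
  rw [xMa, Measure.lintegral_bind (meas_withDensity_fixed hm a).aemeasurable hf.aemeasurable]
  refine lintegral_congr fun s => ?_
  rw [lintegral_withDensity_eq_lintegral_mul lam (m_meas_st hm s a) hf]
  rfl

lemma xMa_ac (hm : Measurable fun p : S × S × A => m p.1 p.2.1 p.2.2)
    (x : Measure S) (a : A) : xMa lam m x a ≪ lam := by
  refine Measure.AbsolutelyContinuous.mk fun G hG hG0 => ?_
  rw [xMa_apply hm x a hG]
  have : lam.restrict G = 0 := by
    rw [Measure.restrict_eq_zero]; exact hG0
  simp [this]

lemma xMa_meas (hm : Measurable fun p : S × S × A => m p.1 p.2.1 p.2.2)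
    (x : Measure S) [SFinite x] : Measurable fun a => xMa lam m x a := by
  apply Measure.measurable_of_measurable_coe
  intro G hG
  have h1 : ∀ a, xMa lam m x a G = ∫⁻ s, ∫⁻ t in G, (m s t a : ℝ≥0∞) ∂lam ∂x :=
    fun a => xMa_apply hm x a hG
  simp only [h1]
  have h2 : Measurable fun q : A × S => ∫⁻ t in G, (m q.2 t q.1 : ℝ≥0∞) ∂lam := by
    have h3 : Measurable fun q : (A × S) × S => (m q.1.2 q.2 q.1.1 : ℝ≥0∞) := m_meas_as hm
    exact Measurable.lintegral_prod_right' (ν := lam.restrict G)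
      (f := fun q : (A × S) × S => (m q.1.2 q.2 q.1.1 : ℝ≥0∞)) h3
  exact Measurable.lintegral_prod_left' (μ := x)
    (f := fun q : S × A => ∫⁻ t in G, (m q.1 t q.2 : ℝ≥0∞) ∂lam)
    (h2.comp (measurable_snd.prodMk measurable_fst))

lemma w_meas (hm : Measurable fun p : S × S × A => m p.1 p.2.1 p.2.2)
    (x : Measure S) [SFinite x] : Measurable fun a => xMa lam m x a Set.univ :=
  (Measure.measurable_coe MeasurableSet.univ).comp (xMa_meas hm x)

/-- total mass identity: `∫ ‖xM_a‖ τ(da) = 1` for a probability `x`. -/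
lemma mass_eq (hm : Measurable fun p : S × S × A => m p.1 p.2.1 p.2.2)
    (hnorm : ∀ s : S, ∫⁻ t, ∫⁻ a, (m s t a : ℝ≥0∞) ∂τ ∂lam = 1)
    (x : Measure S) [IsProbabilityMeasure x] :
    ∫⁻ a, xMa lam m x a Set.univ ∂τ = 1 := by
  have h1 : ∀ a, xMa lam m x a Set.univ = ∫⁻ s, ∫⁻ t, (m s t a : ℝ≥0∞) ∂lam ∂x := by
    intro a
    rw [xMa_apply hm x a MeasurableSet.univ]
    simp [Measure.restrict_univ]
  simp only [h1]
  have hmeas : Measurable fun p : A × S => ∫⁻ t, (m p.2 t p.1 : ℝ≥0∞) ∂lam :=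
    Measurable.lintegral_prod_right' (ν := lam)
      (f := fun q : (A × S) × S => (m q.1.2 q.2 q.1.1 : ℝ≥0∞)) (m_meas_as hm)
  rw [lintegral_lintegral_swap (μ := τ) (ν := x)
    (f := fun a s => ∫⁻ t, (m s t a : ℝ≥0∞) ∂lam) hmeas.aemeasurable]
  have h2 : ∀ s, ∫⁻ a, ∫⁻ t, (m s t a : ℝ≥0∞) ∂lam ∂τ = 1 := by
    intro s
    rw [lintegral_lintegral_swap (μ := τ) (ν := lam)
      (f := fun a t => (m s t a : ℝ≥0∞)) ((m_meas_at hm s).aemeasurable)]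
    exact hnorm s
  simp only [h2]
  simp

lemma hmap_meas (hm : Measurable fun p : S × S × A => m p.1 p.2.1 p.2.2)
    (x : Measure S) [SFinite x] : Measurable fun a => hmap lam m x a := by
  unfold hmap
  apply Measurable.ite
  · exact (w_meas hm x) measurableSet_Ioi
  · apply Measure.measurable_of_measurable_coe
    intro G hG
    simp only [Measure.smul_apply, smul_eq_mul]
    exact ((w_meas hm x).inv).mul ((Measure.measurable_coe hG).comp (xMa_meas hm x))
  · exact measurable_const

lemma Pone_density_meas (hm : Measurable fun p : S × S × A => m p.1 p.2.1 p.2.2) (s : S) :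
    Measurable fun t : S => ∫⁻ a, (m s t a : ℝ≥0∞) ∂τ := by
  have h : Measurable fun q : S × A => (m s q.1 q.2 : ℝ≥0∞) :=
    (hm' hm).comp (measurable_const.prodMk (measurable_fst.prodMk measurable_snd))
  exact Measurable.lintegral_prod_right' (ν := τ)
    (f := fun q : S × A => (m s q.1 q.2 : ℝ≥0∞)) h

lemma Pone_meas (hm : Measurable fun p : S × S × A => m p.1 p.2.1 p.2.2) :
    Measurable (Pone lam τ m) := by
  apply Measure.measurable_of_measurable_coe
  intro G hG
  have h1 : ∀ s : S, Pone lam τ m s G = ∫⁻ t in G, ∫⁻ a, (m s t a : ℝ≥0∞) ∂τ ∂lam :=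
    fun s => withDensity_apply _ hG
  simp only [h1]
  have h2 : Measurable fun q : (S × S) × A => (m q.1.1 q.1.2 q.2 : ℝ≥0∞) :=
    (hm' hm).comp ((measurable_fst.comp measurable_fst).prodMk
      ((measurable_snd.comp measurable_fst).prodMk measurable_snd))
  have h3 : Measurable fun q : S × S => ∫⁻ a, (m q.1 q.2 a : ℝ≥0∞) ∂τ :=
    Measurable.lintegral_prod_right' (ν := τ)
      (f := fun q : (S × S) × A => (m q.1.1 q.1.2 q.2 : ℝ≥0∞)) h2
  exact Measurable.lintegral_prod_right' (ν := lam.restrict G)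
    (f := fun q : S × S => ∫⁻ a, (m q.1 q.2 a : ℝ≥0∞) ∂τ) h3

lemma Piter_meas (hm : Measurable fun p : S × S × A => m p.1 p.2.1 p.2.2) (k : ℕ) :
    Measurable (Piter lam τ m k) := by
  induction k with
  | zero => exact Pone_meas hm
  | succ k ih => exact (Measure.measurable_bind' (Pone_meas hm)).comp ih

/-- `BP y` as a pushforward measure. -/
lemma BP_eq_map (BP : Kernel (Measure S) (Measure S))
    (hm : Measurable fun p : S × S × A => m p.1 p.2.1 p.2.2)
    (hBP : ∀ x : Measure S, IsProbabilityMeasure x → x ≪ lam →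
      ∀ E : Set (Measure S), MeasurableSet E →
        BP x E = ∫⁻ a, (if hmap lam m x a ∈ E then xMa lam m x a Set.univ else 0) ∂τ)
    (y : Measure S) (hy : IsProbabilityMeasure y) (hyl : y ≪ lam) :
    BP y = (τ.withDensity fun a => xMa lam m y a Set.univ).map (fun a => hmap lam m y a) := by
  haveI := hy
  ext E hE
  rw [hBP y hy hyl E hE,
    Measure.map_apply (hmap_meas hm y) hE,
    withDensity_apply _ ((hmap_meas hm y) hE),
    ← lintegral_indicator ((hmap_meas hm y) hE)]
  refine lintegral_congr fun a => ?_
  by_cases h : hmap lam m y a ∈ E <;> simp [Set.indicator_apply, h, Set.mem_preimage]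

/-- One-step lintegral formula for `BP`. -/
lemma BP_lintegral (BP : Kernel (Measure S) (Measure S))
    (hm : Measurable fun p : S × S × A => m p.1 p.2.1 p.2.2)
    (hBP : ∀ x : Measure S, IsProbabilityMeasure x → x ≪ lam →
      ∀ E : Set (Measure S), MeasurableSet E →
        BP x E = ∫⁻ a, (if hmap lam m x a ∈ E then xMa lam m x a Set.univ else 0) ∂τ)
    (y : Measure S) (hy : IsProbabilityMeasure y) (hyl : y ≪ lam)
    {g : Measure S → ℝ≥0∞} (hg : Measurable g) :
    ∫⁻ z, g z ∂(BP y) = ∫⁻ a, xMa lam m y a Set.univ * g (hmap lam m y a) ∂τ := by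
  haveI := hy
  have hcomp : Measurable fun a : A => g (hmap lam m y a) := hg.comp (hmap_meas hm y)
  rw [BP_eq_map BP hm hBP y hy hyl, lintegral_map hg (hmap_meas hm y),
    lintegral_withDensity_eq_lintegral_mul τ (w_meas hm y)
      (g := fun a : A => g (hmap lam m y a)) hcomp]
  rfl

/-- if `y` is good and `D` is measurable and contains no good measure, then `BP y D = 0`. -/
lemma BP_good (BP : Kernel (Measure S) (Measure S))
    (hm : Measurable fun p : S × S × A => m p.1 p.2.1 p.2.2)
    (hnorm : ∀ s : S, ∫⁻ t, ∫⁻ a, (m s t a : ℝ≥0∞) ∂τ ∂lam = 1)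
    (hBP : ∀ x : Measure S, IsProbabilityMeasure x → x ≪ lam →
      ∀ E : Set (Measure S), MeasurableSet E →
        BP x E = ∫⁻ a, (if hmap lam m x a ∈ E then xMa lam m x a Set.univ else 0) ∂τ)
    (y : Measure S) (hy : IsProbabilityMeasure y) (hyl : y ≪ lam)
    {D : Set (Measure S)} (hD : MeasurableSet D)
    (hDbad : ∀ z ∈ D, ¬(IsProbabilityMeasure z ∧ z ≪ lam)) :
    BP y D = 0 := by
  haveI := hy
  rw [hBP y hy hyl D hD]
  have hfin : ∀ᵐ a ∂τ, xMa lam m y a Set.univ < ⊤ := by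
    apply ae_lt_top (w_meas hm y)
    rw [mass_eq hm hnorm y]; exact ENNReal.one_ne_top
  have hae : ∀ᵐ a ∂τ,
      (if hmap lam m y a ∈ D then xMa lam m y a Set.univ else 0) = 0 := by
    filter_upwards [hfin] with a ha
    rcases eq_or_lt_of_le (by simp : (0:ℝ≥0∞) ≤ xMa lam m y a Set.univ) with h0 | hpos
    · by_cases h : hmap lam m y a ∈ D <;> simp [h, ← h0]
    · have hgood : IsProbabilityMeasure (hmap lam m y a) ∧ hmap lam m y a ≪ lam := by
        constructor
        · constructor
          rw [hmap, if_pos hpos, Measure.smul_apply, smul_eq_mul,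
            ENNReal.inv_mul_cancel hpos.ne' ha.ne]
        · rw [hmap, if_pos hpos]
          refine Measure.AbsolutelyContinuous.mk fun G hG hG0 => ?_
          rw [Measure.smul_apply, smul_eq_mul, xMa_ac hm y a hG0, mul_zero]
      rw [if_neg (fun hmem => hDbad _ hmem hgood)]
  calc ∫⁻ a, (if hmap lam m y a ∈ D then xMa lam m y a Set.univ else 0) ∂τ
      = ∫⁻ _, (0 : ℝ≥0∞) ∂τ := lintegral_congr_ae hae
    _ = 0 := lintegral_zero

/-- One-step barycenter formula. -/
lemma BP_barycenter (BP : Kernel (Measure S) (Measure S))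
    (hm : Measurable fun p : S × S × A => m p.1 p.2.1 p.2.2)
    (hnorm : ∀ s : S, ∫⁻ t, ∫⁻ a, (m s t a : ℝ≥0∞) ∂τ ∂lam = 1)
    (hBP : ∀ x : Measure S, IsProbabilityMeasure x → x ≪ lam →
      ∀ E : Set (Measure S), MeasurableSet E →
        BP x E = ∫⁻ a, (if hmap lam m x a ∈ E then xMa lam m x a Set.univ else 0) ∂τ)
    (y : Measure S) (hy : IsProbabilityMeasure y) (hyl : y ≪ lam)
    {f : S → ℝ≥0∞} (hf : Measurable f) :
    ∫⁻ z, ∫⁻ t, f t ∂z ∂(BP y) = ∫⁻ t, f t ∂(y.bind (Pone lam τ m)) := by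
  haveI := hy
  rw [BP_lintegral BP hm hBP y hy hyl (Measure.measurable_lintegral hf)]
  have hfin : ∀ᵐ a ∂τ, xMa lam m y a Set.univ < ⊤ := by
    apply ae_lt_top (w_meas hm y)
    rw [mass_eq hm hnorm y]; exact ENNReal.one_ne_top
  have key : ∫⁻ a, xMa lam m y a Set.univ * ∫⁻ t, f t ∂(hmap lam m y a) ∂τ
      = ∫⁻ a, ∫⁻ t, f t ∂(xMa lam m y a) ∂τ := by
    apply lintegral_congr_ae
    filter_upwards [hfin] with a ha
    rcases eq_or_lt_of_le (by simp : (0:ℝ≥0∞) ≤ xMa lam m y a Set.univ) with h0 | hpos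
    · have h1 : xMa lam m y a = 0 := Measure.measure_univ_eq_zero.mp h0.symm
      simp [h1, ← h0]
    · rw [hmap, if_pos hpos, lintegral_smul_measure, smul_eq_mul, ← mul_assoc,
        ENNReal.mul_inv_cancel hpos.ne' ha.ne, one_mul]
  rw [key]
  have hprod : Measurable fun p : A × S => ∫⁻ t, (m p.2 t p.1 : ℝ≥0∞) * f t ∂lam :=
    Measurable.lintegral_prod_right' (ν := lam)
      (f := fun q : (A × S) × S => (m q.1.2 q.2 q.1.1 : ℝ≥0∞) * f q.2)
      ((m_meas_as hm).mul (hf.comp measurable_snd))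
  calc ∫⁻ a, ∫⁻ t, f t ∂(xMa lam m y a) ∂τ
      = ∫⁻ a, ∫⁻ s, ∫⁻ t, (m s t a : ℝ≥0∞) * f t ∂lam ∂y ∂τ := by
        exact lintegral_congr fun a => xMa_lintegral hm y a hf
    _ = ∫⁻ s, ∫⁻ a, ∫⁻ t, (m s t a : ℝ≥0∞) * f t ∂lam ∂τ ∂y := by
        exact lintegral_lintegral_swap (μ := τ) (ν := y)
          (f := fun a s => ∫⁻ t, (m s t a : ℝ≥0∞) * f t ∂lam) hprod.aemeasurable
    _ = ∫⁻ s, ∫⁻ t, (∫⁻ a, (m s t a : ℝ≥0∞) ∂τ) * f t ∂lam ∂y := by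
        refine lintegral_congr fun s => ?_
        rw [lintegral_lintegral_swap (μ := τ) (ν := lam)
          (f := fun a t => (m s t a : ℝ≥0∞) * f t)
          (((m_meas_at hm s).mul (hf.comp measurable_snd)).aemeasurable)]
        refine lintegral_congr fun t => ?_
        exact lintegral_mul_const _ (m_meas_a hm s t)
    _ = ∫⁻ t, f t ∂(y.bind (Pone lam τ m)) := by
        rw [Measure.lintegral_bind (Pone_meas hm).aemeasurable hf.aemeasurable]
        refine lintegral_congr fun s => ?_
        rw [Pone, lintegral_withDensity_eq_lintegral_mul lam
          (f := fun t : S => ∫⁻ a, (m s t a : ℝ≥0∞) ∂τ) (Pone_density_meas hm s) hf]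
        rfl

end Aux

/-- The barycenter of `𝐏ⁿ(x, ·)` equals `xPⁿ`:
`∫ z(F) 𝐏ⁿ(x, dz) = (xPⁿ)(F)` for all `n ≥ 1`, `x ∈ K` and measurable `F`. -/
theorem stmt_7 {S A : Type*}
    [MetricSpace S] [CompleteSpace S] [TopologicalSpace.SeparableSpace S]
    [MeasurableSpace S] [BorelSpace S]
    [MetricSpace A] [CompleteSpace A] [TopologicalSpace.SeparableSpace A]
    [MeasurableSpace A] [BorelSpace A]
    (lam : Measure S) [SigmaFinite lam] (τ : Measure A) [SigmaFinite τ]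
    (m : S → S → A → ℝ≥0)
    (hm : Measurable fun p : S × S × A => m p.1 p.2.1 p.2.2)
    (hnorm : ∀ s : S, ∫⁻ t, ∫⁻ a, (m s t a : ℝ≥0∞) ∂τ ∂lam = 1)
    (BP : Kernel (Measure S) (Measure S)) [IsMarkovKernel BP]
    (hBP : ∀ x : Measure S, IsProbabilityMeasure x → x ≪ lam →
      ∀ E : Set (Measure S), MeasurableSet E →
        BP x E = ∫⁻ a, (if hmap lam m x a ∈ E then xMa lam m x a Set.univ else 0) ∂τ)
    (n : ℕ) (hn : 1 ≤ n)
    (x : Measure S) (hx : IsProbabilityMeasure x) (hxl : x ≪ lam)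
    (F : Set S) (hF : MeasurableSet F) :
    ∫⁻ z, z F ∂(BPiter BP (n - 1) x) = (x.bind (Piter lam τ m (n - 1))) F := by
  haveI := hx
  have main : ∀ k : ℕ,
      (∀ D : Set (Measure S), MeasurableSet D →
        (∀ z ∈ D, ¬(IsProbabilityMeasure z ∧ z ≪ lam)) → BPiter BP k x D = 0) ∧
      (∀ f : S → ℝ≥0∞, Measurable f →
        ∫⁻ z, ∫⁻ t, f t ∂z ∂(BPiter BP k x) = ∫⁻ t, f t ∂(x.bind (Piter lam τ m k))) := by
    intro k
    induction k with
    | zero =>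
      constructor
      · intro D hD hDbad
        exact BP_good BP hm hnorm hBP x hx hxl hD hDbad
      · intro f hf
        exact BP_barycenter BP hm hnorm hBP x hx hxl hf
    | succ k ih =>
      obtain ⟨ih1, ih2⟩ := ih
      have hBPiter : BPiter BP (k+1) x = (BPiter BP k x).bind fun z => BP z := rfl
      constructor
      · intro D hD hDbad
        rw [hBPiter, Measure.bind_apply hD BP.measurable.aemeasurable]
        have hae : ∀ᵐ y ∂(BPiter BP k x), BP y D = 0 := by
          rw [ae_iff]
          apply ih1
          · have : {y : Measure S | ¬ BP y D = 0} = ((fun y => BP y D) ⁻¹' {0})ᶜ := by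
              ext y; simp [Set.mem_preimage]
            rw [this]
            exact ((BP.measurable_coe hD) (measurableSet_singleton 0)).compl
          · intro z hz hzg
            exact hz (BP_good BP hm hnorm hBP z hzg.1 hzg.2 hD hDbad)
        calc ∫⁻ y, BP y D ∂(BPiter BP k x)
            = ∫⁻ _, (0 : ℝ≥0∞) ∂(BPiter BP k x) := lintegral_congr_ae hae
          _ = 0 := lintegral_zero
      · intro f hf
        have hc : Measurable fun s : S => ∫⁻ t, f t ∂(Pone lam τ m s) :=
          (Measure.measurable_lintegral hf).comp (Pone_meas hm)
        have hG : Measurable fun z : Measure S => ∫⁻ t, f t ∂z :=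
          Measure.measurable_lintegral hf
        rw [hBPiter, Measure.lintegral_bind BP.measurable.aemeasurable hG.aemeasurable]
        have hg1 : Measurable fun y : Measure S => ∫⁻ z, ∫⁻ t, f t ∂z ∂(BP y) :=
          (Measure.measurable_lintegral hG).comp BP.measurable
        have hg2 : Measurable fun y : Measure S => ∫⁻ s, (∫⁻ t, f t ∂(Pone lam τ m s)) ∂y :=
          Measure.measurable_lintegral hc
        have hae : ∀ᵐ y ∂(BPiter BP k x),
            (∫⁻ z, ∫⁻ t, f t ∂z ∂(BP y)) = ∫⁻ s, (∫⁻ t, f t ∂(Pone lam τ m s)) ∂y := by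
          rw [ae_iff]
          apply ih1
          · have : {y : Measure S | ¬ (∫⁻ z, ∫⁻ t, f t ∂z ∂(BP y))
                = ∫⁻ s, (∫⁻ t, f t ∂(Pone lam τ m s)) ∂y}
              = {y : Measure S | (∫⁻ z, ∫⁻ t, f t ∂z ∂(BP y))
                = ∫⁻ s, (∫⁻ t, f t ∂(Pone lam τ m s)) ∂y}ᶜ := by
              ext y; simp
            rw [this]
            exact (aux_measurableSet_eq hg1 hg2).compl
          · intro z hz hzg
            apply hz
            rw [BP_barycenter BP hm hnorm hBP z hzg.1 hzg.2 hf,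
              Measure.lintegral_bind (Pone_meas hm).aemeasurable hf.aemeasurable]
        calc ∫⁻ y, ∫⁻ z, ∫⁻ t, f t ∂z ∂(BP y) ∂(BPiter BP k x)
            = ∫⁻ y, ∫⁻ s, (∫⁻ t, f t ∂(Pone lam τ m s)) ∂y ∂(BPiter BP k x) :=
              lintegral_congr_ae hae
          _ = ∫⁻ s, (∫⁻ t, f t ∂(Pone lam τ m s)) ∂(x.bind (Piter lam τ m k)) := ih2 _ hc
          _ = ∫⁻ t, f t ∂(x.bind (Piter lam τ m (k+1))) := by
              rw [Measure.lintegral_bind (Piter_meas hm k).aemeasurable hc.aemeasurable,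
                Measure.lintegral_bind (Piter_meas hm (k+1)).aemeasurable hf.aemeasurable]
              refine lintegral_congr fun s => ?_
              rw [show Piter lam τ m (k+1) s = (Piter lam τ m k s).bind (Pone lam τ m) from rfl,
                Measure.lintegral_bind (Pone_meas hm).aemeasurable hf.aemeasurable]
  obtain ⟨_, h2⟩ := main (n - 1)
  have h3 := h2 (F.indicator 1) (measurable_one.indicator hF)
  simp_rw [lintegral_indicator_one hF] at h3
  exact h3
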